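/- Let N ⊆ M_d(ℂ) be a unital *-subalgebra, E : M_d(ℂ) → N the trace-preserving conditional expectation onto N, and σ, ρ positive definite states on M_d(ℂ). Then ‖σ^{1/2} σ_N^{−1/2} Γ_N^{1/2} σ_N^{1/2} − Γ^{1/2} σ^{1/2}‖₂ ≥ (1/2) · ‖Γ‖∞^{−1/2} · ‖σ^{−1}‖∞^{−1/2} · ‖σ σ_N^{−1} ρ_N − ρ‖₂. -/

import Mathlib

open Matrix MeasureTheory Filter Topology Kronecker ComplexOrder

/-- Apply a real function to a matrix via the functional calculus for Hermitian
matrices (and return `0` on non-Hermitian input). -/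
noncomputable def mfun {d : ℕ} (f : ℝ → ℝ) (A : Matrix (Fin d) (Fin d) ℂ) :
    Matrix (Fin d) (Fin d) ℂ :=
  if hA : A.IsHermitian then hA.cfc f else 0

/-- Square root of a Hermitian positive semidefinite matrix. -/
noncomputable def msqrt {d : ℕ} (A : Matrix (Fin d) (Fin d) ℂ) : Matrix (Fin d) (Fin d) ℂ :=
  mfun Real.sqrt A

/-- Inverse square root of a Hermitian positive semidefinite matrix (Moore–Penrose
pseudoinverse of the square root in the singular case, since `(0 : ℝ)⁻¹ = 0`). -/
noncomputable def misqrt {d : ℕ} (A : Matrix (Fin d) (Fin d) ℂ) : Matrix (Fin d) (Fin d) ℂ :=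
  mfun (fun x => (Real.sqrt x)⁻¹) A

/-- Inverse of a Hermitian matrix (Moore–Penrose pseudoinverse in the singular case). -/
noncomputable def minv {d : ℕ} (A : Matrix (Fin d) (Fin d) ℂ) : Matrix (Fin d) (Fin d) ℂ :=
  mfun (fun x => x⁻¹) A

/-- Logarithm of a positive definite matrix. -/
noncomputable def mlog {d : ℕ} (A : Matrix (Fin d) (Fin d) ℂ) : Matrix (Fin d) (Fin d) ℂ :=
  mfun Real.log A

/-- Frobenius (Schatten-2) norm ‖A‖₂ = tr(AᴴA)^(1/2). -/
noncomputable def frob {n : Type*} [Fintype n] (A : Matrix n n ℂ) : ℝ :=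
  Real.sqrt (Matrix.trace (Aᴴ * A)).re

/-- Operator norm ‖A‖∞ of a matrix, acting on the Euclidean space ℂᵈ. -/
noncomputable def opNorm {n : Type*} [Fintype n] [DecidableEq n] (A : Matrix n n ℂ) : ℝ :=
  ‖LinearMap.toContinuousLinearMap (Matrix.toEuclideanLin A)‖

/-- The Belavkin–Staszewski relative entropy
`Ŝ_BS(σ‖ρ) = −tr[σ log(σ^{−1/2} ρ σ^{−1/2})]`. -/
noncomputable def BS {d : ℕ} (σ ρ : Matrix (Fin d) (Fin d) ℂ) : ℝ :=
  -(Matrix.trace (σ * mlog (misqrt σ * ρ * misqrt σ))).re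

/-- The maximal f-divergence `Ŝ_f(σ‖ρ) = tr[ρ^{1/2} f(ρ^{−1/2} σ ρ^{−1/2}) ρ^{1/2}]`. -/
noncomputable def hatS {d : ℕ} (f : ℝ → ℝ) (σ ρ : Matrix (Fin d) (Fin d) ℂ) : ℝ :=
  (Matrix.trace (msqrt ρ * mfun f (misqrt ρ * σ * misqrt ρ) * msqrt ρ)).re

/-- The Umegaki relative entropy `D(σ‖ρ) = tr[σ (log σ − log ρ)]`. -/
noncomputable def relEnt {d : ℕ} (σ ρ : Matrix (Fin d) (Fin d) ℂ) : ℝ :=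
  (Matrix.trace (σ * (mlog σ - mlog ρ))).re

/-- The Choi matrix of a linear map between matrix algebras. -/
noncomputable def choi {d₁ d₂ : ℕ} (T : Matrix (Fin d₁) (Fin d₁) ℂ →ₗ[ℂ] Matrix (Fin d₂) (Fin d₂) ℂ) :
    Matrix (Fin d₁ × Fin d₂) (Fin d₁ × Fin d₂) ℂ :=
  Matrix.of fun p q => T (Matrix.single p.1 q.1 1) p.2 q.2

/-- A quantum channel: a completely positive (equivalently, with positive semidefinite Choi
matrix) trace-preserving linear map. -/
def IsCPTP {d₁ d₂ : ℕ} (T : Matrix (Fin d₁) (Fin d₁) ℂ →ₗ[ℂ] Matrix (Fin d₂) (Fin d₂) ℂ) :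
    Prop :=
  (choi T).PosSemidef ∧ ∀ A, (T A).trace = A.trace

/-- Partial trace over the second tensor factor. -/
noncomputable def ptrace2 {d₂ s : ℕ} (M : Matrix (Fin d₂ × Fin s) (Fin d₂ × Fin s) ℂ) :
    Matrix (Fin d₂) (Fin d₂) ℂ :=
  Matrix.of fun i j => ∑ k : Fin s, M (i, k) (j, k)

/-- The Loewner order: `A ≤ B` iff `B - A` is positive semidefinite. -/
def Loewner {n : ℕ} (A B : Matrix (Fin n) (Fin n) ℂ) : Prop := (B - A).PosSemidef

/-- A function `f : (0,∞) → ℝ` is operator convex. -/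
def OperatorConvex (f : ℝ → ℝ) : Prop :=
  ∀ (n : ℕ) (A B : Matrix (Fin n) (Fin n) ℂ), A.PosDef → B.PosDef →
    ∀ t : ℝ, 0 ≤ t → t ≤ 1 →
      Loewner (mfun f ((t : ℂ) • A + ((1 - t : ℝ) : ℂ) • B))
        ((t : ℂ) • mfun f A + ((1 - t : ℝ) : ℂ) • mfun f B)

/-- A function `f : (0,∞) → ℝ` is operator monotone decreasing. -/
def OperatorAntitone (f : ℝ → ℝ) : Prop :=
  ∀ (n : ℕ) (A B : Matrix (Fin n) (Fin n) ℂ), A.PosDef → B.PosDef →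
    Loewner A B → Loewner (mfun f B) (mfun f A)

namespace Stmt11Aux
variable {d : ℕ} {A : Matrix (Fin d) (Fin d) ℂ}

/-! cfc block (proved earlier) -/
lemma star_mul_self_eigU (hA : A.IsHermitian) :
    (star (hA.eigenvectorUnitary : Matrix (Fin d) (Fin d) ℂ)) * (hA.eigenvectorUnitary : Matrix (Fin d) (Fin d) ℂ) = 1 :=
  Unitary.coe_star_mul_self _

lemma mul_star_self_eigU (hA : A.IsHermitian) :
    (hA.eigenvectorUnitary : Matrix (Fin d) (Fin d) ℂ) * (star (hA.eigenvectorUnitary : Matrix (Fin d) (Fin d) ℂ)) = 1 :=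
  Unitary.coe_mul_star_self _

lemma cfc_herm (hA : A.IsHermitian) (f : ℝ → ℝ) : (hA.cfc f).IsHermitian := by
  unfold Matrix.IsHermitian.cfc
  set U : Matrix (Fin d) (Fin d) ℂ := (hA.eigenvectorUnitary : Matrix (Fin d) (Fin d) ℂ) with hU
  show (U * _ * star U).IsHermitian
  rw [IsHermitian, ← star_eq_conjTranspose, StarMul.star_mul, StarMul.star_mul, star_star,
    star_eq_conjTranspose (diagonal _), diagonal_conjTranspose]
  have : (star (RCLike.ofReal ∘ f ∘ hA.eigenvalues) : Fin d → ℂ)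
      = RCLike.ofReal ∘ f ∘ hA.eigenvalues := by
    funext i
    simp [Function.comp, Pi.star_apply, RCLike.conj_ofReal]
  rw [this, mul_assoc]

lemma cfc_mul_cfc (hA : A.IsHermitian) (f g : ℝ → ℝ) :
    hA.cfc f * hA.cfc g = hA.cfc (fun x => f x * g x) := by
  unfold Matrix.IsHermitian.cfc
  set U : Matrix (Fin d) (Fin d) ℂ := (hA.eigenvectorUnitary : Matrix (Fin d) (Fin d) ℂ) with hU
  show U * _ * star U * (U * _ * star U) = U * _ * star U
  have h1 : star U * U = 1 := star_mul_self_eigU hA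
  calc U * diagonal (RCLike.ofReal ∘ f ∘ hA.eigenvalues) * star U *
        (U * diagonal (RCLike.ofReal ∘ g ∘ hA.eigenvalues) * star U)
      = U * (diagonal (RCLike.ofReal ∘ f ∘ hA.eigenvalues) * (star U * U) *
          diagonal (RCLike.ofReal ∘ g ∘ hA.eigenvalues)) * star U := by
        simp only [mul_assoc]
    _ = U * diagonal (RCLike.ofReal ∘ (fun x => f x * g x) ∘ hA.eigenvalues) * star U := by
        rw [h1, mul_one, diagonal_mul_diagonal]
        have : (fun i => (RCLike.ofReal ∘ f ∘ hA.eigenvalues) i * (RCLike.ofReal ∘ g ∘ hA.eigenvalues) i : Fin d → ℂ)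
            = (RCLike.ofReal ∘ (fun x => f x * g x) ∘ hA.eigenvalues) := by
          funext i
          simp
        rw [this]

lemma cfc_congr (hA : A.IsHermitian) {f g : ℝ → ℝ}
    (h : ∀ i, f (hA.eigenvalues i) = g (hA.eigenvalues i)) : hA.cfc f = hA.cfc g := by
  have : (RCLike.ofReal ∘ f ∘ hA.eigenvalues : Fin d → ℂ)
      = RCLike.ofReal ∘ g ∘ hA.eigenvalues := by
    funext i
    simp [Function.comp, h i]
  unfold Matrix.IsHermitian.cfc
  rw [this]

lemma cfc_one (hA : A.IsHermitian) : hA.cfc (fun _ => 1) = 1 := by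
  unfold Matrix.IsHermitian.cfc
  have : diagonal (RCLike.ofReal ∘ (fun _ => (1:ℝ)) ∘ hA.eigenvalues) =
      (1 : Matrix (Fin d) (Fin d) ℂ) := by
    rw [← diagonal_one]
    congr 1
  rw [this, Unitary.conjStarAlgAut_apply, mul_one]
  exact mul_star_self_eigU hA

lemma cfc_id (hA : A.IsHermitian) : hA.cfc (fun x => x) = A := by
  conv_rhs => rw [hA.spectral_theorem]
  rfl

lemma cfc_posSemidef (hA : A.IsHermitian) {f : ℝ → ℝ}
    (hf : ∀ i, 0 ≤ f (hA.eigenvalues i)) : (hA.cfc f).PosSemidef := by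
  unfold Matrix.IsHermitian.cfc
  change ((hA.eigenvectorUnitary : Matrix (Fin d) (Fin d) ℂ) * diagonal (RCLike.ofReal ∘ f ∘ hA.eigenvalues)
      * (hA.eigenvectorUnitary : Matrix (Fin d) (Fin d) ℂ)ᴴ).PosSemidef
  exact PosSemidef.mul_mul_conjTranspose_same (by
    refine posSemidef_diagonal_iff.mpr fun i => ?_
    rw [Function.comp_apply, Function.comp_apply, RCLike.nonneg_iff]
    constructor
    · simpa using hf i
    · simp) _

/-! mfun derived -/
lemma mfun_of (hA : A.IsHermitian) (f : ℝ → ℝ) : mfun f A = hA.cfc f := dif_pos hA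

lemma msqrt_herm (hA : A.IsHermitian) : (msqrt A).IsHermitian := by
  rw [msqrt, mfun_of hA]; exact cfc_herm hA _

lemma misqrt_herm (hA : A.IsHermitian) : (misqrt A).IsHermitian := by
  rw [misqrt, mfun_of hA]; exact cfc_herm hA _

lemma minv_herm (hA : A.IsHermitian) : (minv A).IsHermitian := by
  rw [minv, mfun_of hA]; exact cfc_herm hA _

lemma msqrt_mul_self (hA : A.PosSemidef) : msqrt A * msqrt A = A := by
  rw [msqrt, mfun_of hA.1, cfc_mul_cfc,
    cfc_congr hA.1 (g := fun x => x) fun i => Real.mul_self_sqrt (hA.eigenvalues_nonneg i)]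
  exact cfc_id hA.1

lemma msqrt_posSemidef (hA : A.PosSemidef) : (msqrt A).PosSemidef := by
  rw [msqrt, mfun_of hA.1]
  exact cfc_posSemidef hA.1 fun i => Real.sqrt_nonneg _

lemma minv_posSemidef (hA : A.PosSemidef) : (minv A).PosSemidef := by
  rw [minv, mfun_of hA.1]
  exact cfc_posSemidef hA.1 fun i => inv_nonneg.mpr (hA.eigenvalues_nonneg i)

lemma misqrt_mul_msqrt (hA : A.PosDef) : misqrt A * msqrt A = 1 := by
  rw [msqrt, misqrt, mfun_of hA.1, mfun_of hA.1, cfc_mul_cfc,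
    cfc_congr hA.1 (g := fun _ => 1) fun i => by
      rw [inv_mul_cancel₀ (Real.sqrt_ne_zero'.mpr (hA.eigenvalues_pos i))]]
  exact cfc_one hA.1

lemma msqrt_mul_misqrt (hA : A.PosDef) : msqrt A * misqrt A = 1 := by
  rw [msqrt, misqrt, mfun_of hA.1, mfun_of hA.1, cfc_mul_cfc,
    cfc_congr hA.1 (g := fun _ => 1) fun i => by
      rw [mul_inv_cancel₀ (Real.sqrt_ne_zero'.mpr (hA.eigenvalues_pos i))]]
  exact cfc_one hA.1

lemma misqrt_mul_misqrt (hA : A.PosSemidef) : misqrt A * misqrt A = minv A := by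
  rw [misqrt, minv, mfun_of hA.1, mfun_of hA.1, cfc_mul_cfc]
  refine cfc_congr hA.1 fun i => ?_
  rw [← mul_inv, Real.mul_self_sqrt (hA.eigenvalues_nonneg i)]

lemma mul_minv (hA : A.PosDef) : A * minv A = 1 := by
  have h : A * minv A = hA.1.cfc (fun x => x) * hA.1.cfc (fun x => x⁻¹) := by
    rw [cfc_id hA.1, minv, mfun_of hA.1]
  rw [h, cfc_mul_cfc,
    cfc_congr hA.1 (g := fun _ => 1) fun i => mul_inv_cancel₀ (hA.eigenvalues_pos i).ne']
  exact cfc_one hA.1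


/-! Euclidean / ns block -/
noncomputable def ns {d : ℕ} (v : Fin d → ℂ) : ℝ := ∑ i, ‖v i‖ ^ 2

lemma ns_nonneg (v : Fin d → ℂ) : 0 ≤ ns v := Finset.sum_nonneg fun _ _ => sq_nonneg _

lemma ns_pos {v : Fin d → ℂ} (hv : v ≠ 0) : 0 < ns v := by
  obtain ⟨i, hi⟩ : ∃ i, v i ≠ 0 := by
    by_contra h
    push_neg at h
    exact hv (funext h)
  refine Finset.sum_pos' (fun j _ => sq_nonneg _) ⟨i, Finset.mem_univ i, ?_⟩
  exact pow_pos (norm_pos_iff.mpr hi) 2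

lemma norm_equiv_symm (v : Fin d → ℂ) :
    ‖(WithLp.equiv 2 (Fin d → ℂ)).symm v‖ = Real.sqrt (ns v) := by
  rw [EuclideanSpace.norm_eq]
  rfl

lemma ns_mulVec_le (M : Matrix (Fin d) (Fin d) ℂ) (v : Fin d → ℂ) :
    ns (M *ᵥ v) ≤ opNorm M ^ 2 * ns v := by
  have h := (LinearMap.toContinuousLinearMap (Matrix.toEuclideanLin M)).le_opNorm
    ((WithLp.equiv 2 (Fin d → ℂ)).symm v)
  rw [LinearMap.coe_toContinuousLinearMap'] at h
  rw [show Matrix.toEuclideanLin M ((WithLp.equiv 2 (Fin d → ℂ)).symm v) = (WithLp.equiv 2 (Fin d → ℂ)).symm (M *ᵥ v) from rfl, norm_equiv_symm, norm_equiv_symm] at h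
  have h2 : Real.sqrt (ns (M *ᵥ v)) ^ 2 ≤ (opNorm M * Real.sqrt (ns v)) ^ 2 :=
    pow_le_pow_left₀ (Real.sqrt_nonneg _) h 2
  rw [Real.sq_sqrt (ns_nonneg _), mul_pow, Real.sq_sqrt (ns_nonneg _)] at h2
  exact h2

lemma opNorm_le_of {M : Matrix (Fin d) (Fin d) ℂ} {c : ℝ} (hc : 0 ≤ c)
    (h : ∀ v, ns (M *ᵥ v) ≤ c ^ 2 * ns v) : opNorm M ≤ c := by
  apply ContinuousLinearMap.opNorm_le_bound _ hc
  intro x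
  rw [LinearMap.coe_toContinuousLinearMap']
  have hx : x = (WithLp.equiv 2 (Fin d → ℂ)).symm ((WithLp.equiv 2 (Fin d → ℂ)) x) := rfl
  rw [hx, show Matrix.toEuclideanLin M ((WithLp.equiv 2 (Fin d → ℂ)).symm ((WithLp.equiv 2 (Fin d → ℂ)) x)) = (WithLp.equiv 2 (Fin d → ℂ)).symm (M *ᵥ (WithLp.equiv 2 (Fin d → ℂ)) x) from rfl, norm_equiv_symm, norm_equiv_symm]
  calc Real.sqrt (ns (M *ᵥ (WithLp.equiv 2 (Fin d → ℂ)) x))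
      ≤ Real.sqrt (c ^ 2 * ns ((WithLp.equiv 2 (Fin d → ℂ)) x)) :=
        Real.sqrt_le_sqrt (h _)
    _ = c * Real.sqrt (ns ((WithLp.equiv 2 (Fin d → ℂ)) x)) := by
        rw [Real.sqrt_mul (sq_nonneg c), Real.sqrt_sq hc]

lemma dot_cauchy (u v : Fin d → ℂ) :
    (dotProduct (star u) v).re ≤ Real.sqrt (ns u) * Real.sqrt (ns v) := by
  have h1 : dotProduct (star u) v
      = inner ℂ ((WithLp.equiv 2 (Fin d → ℂ)).symm u) ((WithLp.equiv 2 (Fin d → ℂ)).symm v) :=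
    by rw [dotProduct_comm]; rfl
  rw [h1]
  calc (inner ℂ ((WithLp.equiv 2 (Fin d → ℂ)).symm u) ((WithLp.equiv 2 (Fin d → ℂ)).symm v) : ℂ).re
      ≤ ‖(inner ℂ ((WithLp.equiv 2 (Fin d → ℂ)).symm u) ((WithLp.equiv 2 (Fin d → ℂ)).symm v) : ℂ)‖ :=
        Complex.re_le_norm _
    _ ≤ ‖(WithLp.equiv 2 (Fin d → ℂ)).symm u‖ * ‖(WithLp.equiv 2 (Fin d → ℂ)).symm v‖ :=
        norm_inner_le_norm _ _
    _ = _ := by rw [norm_equiv_symm, norm_equiv_symm]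

lemma quad_le_opNorm (M : Matrix (Fin d) (Fin d) ℂ) (v : Fin d → ℂ) :
    (dotProduct (star v) (M *ᵥ v)).re ≤ opNorm M * ns v := by
  calc (dotProduct (star v) (M *ᵥ v)).re
      ≤ Real.sqrt (ns v) * Real.sqrt (ns (M *ᵥ v)) := dot_cauchy _ _
    _ ≤ Real.sqrt (ns v) * Real.sqrt (opNorm M ^ 2 * ns v) :=
        mul_le_mul_of_nonneg_left (Real.sqrt_le_sqrt (ns_mulVec_le M v)) (Real.sqrt_nonneg _)
    _ = opNorm M * ns v := by
        have hop : (0:ℝ) ≤ opNorm M := norm_nonneg _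
        rw [Real.sqrt_mul (sq_nonneg _), Real.sqrt_sq hop,
          show Real.sqrt (ns v) * (opNorm M * Real.sqrt (ns v))
            = opNorm M * (Real.sqrt (ns v) * Real.sqrt (ns v)) by ring,
          Real.mul_self_sqrt (ns_nonneg v)]

/-! frobenius block -/
lemma trn_eq (M : Matrix (Fin d) (Fin d) ℂ) :
    (Matrix.trace (Mᴴ * M)).re = ∑ j, ns (fun i => M i j) := by
  rw [Matrix.trace, Complex.re_sum]
  congr 1
  funext j
  rw [Matrix.diag_apply, Matrix.mul_apply, Complex.re_sum]
  congr 1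
  funext i
  rw [Matrix.conjTranspose_apply, mul_comm,
    show star (M i j) = starRingEnd ℂ (M i j) from rfl, Complex.mul_conj]
  simp [Complex.sq_norm]

lemma trn_nonneg (M : Matrix (Fin d) (Fin d) ℂ) : 0 ≤ (Matrix.trace (Mᴴ * M)).re := by
  rw [trn_eq]; exact Finset.sum_nonneg fun _ _ => ns_nonneg _

lemma frob_nonneg (M : Matrix (Fin d) (Fin d) ℂ) : 0 ≤ frob M := Real.sqrt_nonneg _

lemma frob_sq (M : Matrix (Fin d) (Fin d) ℂ) :
    frob M ^ 2 = (Matrix.trace (Mᴴ * M)).re := Real.sq_sqrt (trn_nonneg M)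

lemma frob_eq_norm (M : Matrix (Fin d) (Fin d) ℂ) :
    frob M = ‖(WithLp.equiv 2 (Fin d × Fin d → ℂ)).symm (fun p => M p.1 p.2)‖ := by
  rw [frob, EuclideanSpace.norm_eq, trn_eq]
  congr 1
  rw [show (∑ p : Fin d × Fin d, ‖(WithLp.equiv 2 (Fin d × Fin d → ℂ)).symm (fun p => M p.1 p.2) p‖ ^ 2)
      = ∑ p : Fin d × Fin d, ‖M p.1 p.2‖ ^ 2 from rfl, Fintype.sum_prod_type]
  simp only [ns]
  exact Finset.sum_comm

lemma frob_add_le (M N : Matrix (Fin d) (Fin d) ℂ) : frob (M + N) ≤ frob M + frob N := by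
  rw [frob_eq_norm, frob_eq_norm, frob_eq_norm]
  have h : ((WithLp.equiv 2 (Fin d × Fin d → ℂ)).symm (fun p => (M + N) p.1 p.2))
      = (WithLp.equiv 2 (Fin d × Fin d → ℂ)).symm (fun p => M p.1 p.2)
        + (WithLp.equiv 2 (Fin d × Fin d → ℂ)).symm (fun p => N p.1 p.2) := rfl
  rw [h]
  exact norm_add_le _ _

lemma frob_conjTranspose (M : Matrix (Fin d) (Fin d) ℂ) : frob Mᴴ = frob M := by
  rw [frob, frob, trn_eq, trn_eq]
  rw [show (∑ j, ns fun i => Mᴴ i j) = ∑ j, ∑ i, ‖M j i‖ ^ 2 by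
    congr 1; funext j; rw [ns]; congr 1; funext i
    rw [Matrix.conjTranspose_apply, norm_star]]
  congr 1
  rw [Finset.sum_comm]
  rfl

lemma col_mul (X M : Matrix (Fin d) (Fin d) ℂ) (j : Fin d) :
    (fun i => (X * M) i j) = X *ᵥ (fun k => M k j) := by
  funext i
  rw [Matrix.mul_apply, Matrix.mulVec, dotProduct]

section
open scoped Matrix.Norms.L2Operator

lemma opNorm_conjT (X : Matrix (Fin d) (Fin d) ℂ) : opNorm Xᴴ = opNorm X :=
  Matrix.l2_opNorm_conjTranspose X

end

lemma frob_mul_le_left (X M : Matrix (Fin d) (Fin d) ℂ) :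
    frob (X * M) ≤ opNorm X * frob M := by
  have hb : 0 ≤ opNorm X := norm_nonneg _
  rw [frob, frob, trn_eq, trn_eq]
  calc Real.sqrt (∑ j, ns fun i => (X * M) i j)
      ≤ Real.sqrt (∑ j, opNorm X ^ 2 * ns (fun k => M k j)) := by
        apply Real.sqrt_le_sqrt
        apply Finset.sum_le_sum
        intro j _
        rw [col_mul]
        exact ns_mulVec_le X _
    _ = opNorm X * Real.sqrt (∑ j, ns fun k => M k j) := by
        rw [← Finset.mul_sum, Real.sqrt_mul (sq_nonneg _), Real.sqrt_sq hb]

lemma frob_mul_le_right (M X : Matrix (Fin d) (Fin d) ℂ) :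
    frob (M * X) ≤ frob M * opNorm X := by
  rw [← frob_conjTranspose (M * X), Matrix.conjTranspose_mul]
  calc frob (Xᴴ * Mᴴ) ≤ opNorm Xᴴ * frob Mᴴ := frob_mul_le_left _ _
    _ = frob M * opNorm X := by rw [opNorm_conjT, frob_conjTranspose, mul_comm]

lemma ns_mulVec_le_trn (M : Matrix (Fin d) (Fin d) ℂ) (v : Fin d → ℂ) :
    ns (M *ᵥ v) ≤ (Matrix.trace (Mᴴ * M)).re * ns v := by
  rw [trn_eq, show (∑ j, ns fun i => M i j) = ∑ i, ns (fun j => M i j) by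
    simp only [ns]; exact Finset.sum_comm]
  rw [ns, Finset.sum_mul]
  apply Finset.sum_le_sum
  intro i _
  have key : ‖(M *ᵥ v) i‖ ≤ Real.sqrt (ns (fun j => M i j)) * Real.sqrt (ns v) := by
    have h1 : (M *ᵥ v) i = inner ℂ ((WithLp.equiv 2 (Fin d → ℂ)).symm (star (fun j => M i j)))
        ((WithLp.equiv 2 (Fin d → ℂ)).symm v) := by
      change _ = dotProduct v (star (star (fun j => M i j)))
      rw [star_star, dotProduct_comm]
      rfl
    rw [h1]
    calc ‖(inner ℂ ((WithLp.equiv 2 (Fin d → ℂ)).symm (star (fun j => M i j)))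
          ((WithLp.equiv 2 (Fin d → ℂ)).symm v) : ℂ)‖
        ≤ ‖(WithLp.equiv 2 (Fin d → ℂ)).symm (star (fun j => M i j))‖
          * ‖(WithLp.equiv 2 (Fin d → ℂ)).symm v‖ := norm_inner_le_norm _ _
      _ = Real.sqrt (ns (star (fun j => M i j))) * Real.sqrt (ns v) := by
          rw [norm_equiv_symm, norm_equiv_symm]
      _ = Real.sqrt (ns (fun j => M i j)) * Real.sqrt (ns v) := by
          congr 2
          rw [ns, ns]
          congr 1
          funext j
          rw [Pi.star_apply, norm_star]
  calc ‖(M *ᵥ v) i‖ ^ 2 ≤ (Real.sqrt (ns (fun j => M i j)) * Real.sqrt (ns v)) ^ 2 :=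
        pow_le_pow_left₀ (norm_nonneg _) key 2
    _ = ns (fun j => M i j) * ns v := by
        rw [mul_pow, Real.sq_sqrt (ns_nonneg _), Real.sq_sqrt (ns_nonneg _)]

lemma opNorm_le_frob (M : Matrix (Fin d) (Fin d) ℂ) : opNorm M ≤ frob M := by
  apply opNorm_le_of (frob_nonneg M)
  intro v
  rw [frob_sq]
  exact ns_mulVec_le_trn M v

/-! quadratic form block -/
lemma ns_eq_dot (v : Fin d → ℂ) : dotProduct (star v) v = (ns v : ℂ) := by
  rw [dotProduct, ns, Complex.ofReal_sum]
  congr 1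
  funext i
  rw [Pi.star_apply, mul_comm, show star (v i) = starRingEnd ℂ (v i) from rfl,
    Complex.mul_conj]
  simp [Complex.sq_norm]

lemma dot_conj {R M : Matrix (Fin d) (Fin d) ℂ} (hR : R.IsHermitian) (v : Fin d → ℂ) :
    dotProduct (star v) ((R * (M * R)) *ᵥ v)
      = dotProduct (star (R *ᵥ v)) (M *ᵥ (R *ᵥ v)) := by
  rw [← Matrix.mulVec_mulVec, ← Matrix.mulVec_mulVec, Matrix.dotProduct_mulVec,
    ← hR.eq, ← Matrix.star_mulVec, hR.eq]

lemma quad_sq {R : Matrix (Fin d) (Fin d) ℂ} (hR : R.IsHermitian) (v : Fin d → ℂ) :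
    (dotProduct (star v) ((R * R) *ᵥ v)).re = ns (R *ᵥ v) := by
  rw [← Matrix.mulVec_mulVec, Matrix.dotProduct_mulVec, ← hR.eq, ← Matrix.star_mulVec,
    hR.eq, ns_eq_dot]
  simp

lemma dot_split {R S : Matrix (Fin d) (Fin d) ℂ} (hR : R.IsHermitian) (v : Fin d → ℂ) :
    dotProduct (star v) ((R * S) *ᵥ v)
      = dotProduct (star (R *ᵥ v)) (S *ᵥ v) := by
  rw [← Matrix.mulVec_mulVec, Matrix.dotProduct_mulVec, ← hR.eq, ← Matrix.star_mulVec, hR.eq]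

lemma quad_sq' {R : Matrix (Fin d) (Fin d) ℂ} (hR : R.IsHermitian) (v : Fin d → ℂ) :
    (dotProduct (star v) ((R * R) *ᵥ v)).re = ns (R *ᵥ v) := by
  rw [dot_split hR, ns_eq_dot]
  simp

lemma trace_psd_le {P Q : Matrix (Fin d) (Fin d) ℂ} (hQ : Q.PosSemidef) :
    (Matrix.trace (P * Q)).re ≤ opNorm P * (Matrix.trace Q).re := by
  have hRh := msqrt_herm hQ.1
  have hRR := msqrt_mul_self hQ
  set R := msqrt Q with hRdef
  have h1 : Matrix.trace (P * Q) = Matrix.trace (R * (P * R)) := by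
    rw [← hRR, show P * (R * R) = (P * R) * R by rw [mul_assoc], Matrix.trace_mul_comm]
  have key : ∀ i, (R * (P * R)) i i
      = dotProduct (star (fun j => R j i)) (P *ᵥ (fun j => R j i)) := by
    intro i
    rw [Matrix.mul_apply, dotProduct]
    congr 1
    funext j
    have e1 : R i j = star (R j i) := by
      rw [← Matrix.conjTranspose_apply, hRh.eq]
    rw [Matrix.mul_apply, e1]
    rfl
  calc (Matrix.trace (P * Q)).re = ∑ i, ((R * (P * R)) i i).re := by
        rw [h1, Matrix.trace, Complex.re_sum]
        rfl
    _ ≤ ∑ i, opNorm P * ns (fun j => R j i) := by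
        apply Finset.sum_le_sum
        intro i _
        rw [key i]
        exact quad_le_opNorm P _
    _ = opNorm P * (Matrix.trace Q).re := by
        rw [← Finset.mul_sum]
        congr 1
        rw [← trn_eq, hRh.eq, hRR]

lemma opNorm_psd_le_of_quad {P : Matrix (Fin d) (Fin d) ℂ} (hP : P.PosSemidef) {c : ℝ}
    (hc : 0 ≤ c) (h : ∀ v, (dotProduct (star v) (P *ᵥ v)).re ≤ c * ns v) :
    opNorm P ≤ c := by
  apply opNorm_le_of hc
  intro v
  have hRh := msqrt_herm hP.1
  have hRR := msqrt_mul_self hP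
  set R := msqrt P with hRdef
  have hPP : P * P = R * ((P * R)) := by
    rw [← hRR]
    simp only [mul_assoc]
  have e1 : ns (P *ᵥ v) = (dotProduct (star v) ((P * P) *ᵥ v)).re :=
    (quad_sq' hP.1 v).symm
  rw [e1, hPP, dot_conj hRh]
  calc (dotProduct (star (R *ᵥ v)) (P *ᵥ (R *ᵥ v))).re
      ≤ c * ns (R *ᵥ v) := h _
    _ = c * (dotProduct (star v) ((R * R) *ᵥ v)).re := by rw [quad_sq' hRh]
    _ = c * (dotProduct (star v) (P *ᵥ v)).re := by rw [hRR]
    _ ≤ c * (c * ns v) := mul_le_mul_of_nonneg_left (h v) hc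
    _ = c ^ 2 * ns v := by ring

lemma posDef_of_quad {P : Matrix (Fin d) (Fin d) ℂ} (hP : P.PosSemidef) {c : ℝ}
    (hc : 0 < c) (h : ∀ v, c * ns v ≤ (dotProduct (star v) (P *ᵥ v)).re) :
    P.PosDef := by
  refine Matrix.PosDef.of_dotProduct_mulVec_pos hP.1 fun x hx => ?_
  have h0 : 0 ≤ dotProduct (star x) (P *ᵥ x) := hP.dotProduct_mulVec_nonneg x
  rw [RCLike.pos_iff]
  refine ⟨lt_of_lt_of_le (mul_pos hc (ns_pos hx)) (h x), (RCLike.nonneg_iff.mp h0).2⟩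

lemma conj_psd {A B : Matrix (Fin d) (Fin d) ℂ} (hA : A.PosSemidef) (hB : B.IsHermitian) :
    (B * A * B).PosSemidef := by
  have h := hA.mul_mul_conjTranspose_same B
  rwa [hB.eq] at h

lemma inv_conj_one {A iA sA : Matrix (Fin d) (Fin d) ℂ} (h1 : iA * sA = 1)
    (h2 : sA * iA = 1) (h3 : sA * sA = A) : iA * (A * iA) = 1 := by
  rw [← h3]
  calc iA * (sA * sA * iA) = (iA * sA) * (sA * iA) := by simp only [mul_assoc]
    _ = 1 := by rw [h1, h2, one_mul]

lemma misqrt_conj_one {A : Matrix (Fin d) (Fin d) ℂ} (hA : A.PosDef) :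
    misqrt A * (A * misqrt A) = 1 :=
  inv_conj_one (misqrt_mul_msqrt hA) (msqrt_mul_misqrt hA) (msqrt_mul_self hA.posSemidef)

lemma tr_conj_inv {A : Matrix (Fin d) (Fin d) ℂ} (hA : A.PosDef)
    (B : Matrix (Fin d) (Fin d) ℂ) :
    Matrix.trace (misqrt A * B * misqrt A * A) = Matrix.trace B := by
  have hiAi : misqrt A * (A * misqrt A) = 1 := misqrt_conj_one hA
  calc Matrix.trace (misqrt A * B * misqrt A * A)
      = Matrix.trace (misqrt A * (B * (misqrt A * A))) := by simp only [mul_assoc]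
    _ = Matrix.trace ((B * (misqrt A * A)) * misqrt A) := Matrix.trace_mul_comm _ _
    _ = Matrix.trace (B * (misqrt A * (A * misqrt A))) := by simp only [mul_assoc]
    _ = Matrix.trace B := by rw [hiAi, mul_one]

lemma dot_sub_smul_one (P : Matrix (Fin d) (Fin d) ℂ) (c : ℝ) (v : Fin d → ℂ) :
    dotProduct (star v) ((P - (c : ℂ) • 1) *ᵥ v)
      = dotProduct (star v) (P *ᵥ v) - (c : ℂ) * (ns v : ℂ) := by
  rw [Matrix.sub_mulVec, dotProduct_sub, Matrix.smul_mulVec, Matrix.one_mulVec,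
    dotProduct_smul, ns_eq_dot, smul_eq_mul]

lemma psd_sub_smul {P : Matrix (Fin d) (Fin d) ℂ} (hP : P.PosSemidef) {c : ℝ}
    (h : ∀ v, c * ns v ≤ (dotProduct (star v) (P *ᵥ v)).re) :
    (P - (c : ℂ) • 1).PosSemidef := by
  refine Matrix.PosSemidef.of_dotProduct_mulVec_nonneg ?_ ?_
  · refine hP.1.sub ?_
    rw [Matrix.IsHermitian, Matrix.conjTranspose_smul, Matrix.conjTranspose_one]
    congr 1
    exact Complex.conj_ofReal c
  · intro x
    have him : (dotProduct (star x) (P *ᵥ x)).im = 0 := by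
      have h0 := hP.dotProduct_mulVec_nonneg x
      rw [Complex.le_def] at h0
      simpa using h0.2.symm
    rw [dot_sub_smul_one, Complex.le_def]
    constructor
    · simp only [Complex.zero_re, Complex.sub_re, Complex.mul_re, Complex.ofReal_re,
        Complex.ofReal_im, zero_mul, mul_zero, sub_zero]
      have h1 := h x
      linarith
    · simp only [Complex.zero_im, Complex.sub_im, Complex.mul_im, Complex.ofReal_im,
        Complex.ofReal_re, zero_mul, mul_zero, add_zero, him]
      simp

lemma quad_of_psd_sub {P : Matrix (Fin d) (Fin d) ℂ} {c : ℝ}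
    (h : (P - (c : ℂ) • 1).PosSemidef) :
    ∀ v, c * ns v ≤ (dotProduct (star v) (P *ᵥ v)).re := by
  intro v
  have h2 := h.dotProduct_mulVec_nonneg v
  rw [dot_sub_smul_one, Complex.le_def] at h2
  have h3 := h2.1
  simp only [Complex.zero_re, Complex.sub_re, Complex.mul_re, Complex.ofReal_re,
    Complex.ofReal_im, zero_mul, mul_zero, sub_zero] at h3
  linarith

end Stmt11Aux

open Stmt11Aux in
theorem stmt11 {d : ℕ}
    (N : Subalgebra ℂ (Matrix (Fin d) (Fin d) ℂ))
    (hNstar : ∀ A ∈ N, Aᴴ ∈ N)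
    (E : Matrix (Fin d) (Fin d) ℂ →ₗ[ℂ] Matrix (Fin d) (Fin d) ℂ)
    (hEpos : ∀ A : Matrix (Fin d) (Fin d) ℂ, A.PosSemidef → (E A).PosSemidef)
    (hEmem : ∀ A : Matrix (Fin d) (Fin d) ℂ, E A ∈ N)
    (hEfix : ∀ B ∈ N, E B = B)
    (hEmod : ∀ (A : Matrix (Fin d) (Fin d) ℂ), ∀ B ∈ N, E (A * B) = E A * B)
    (hEtr : ∀ A : Matrix (Fin d) (Fin d) ℂ, (E A).trace = A.trace)
    (σ ρ : Matrix (Fin d) (Fin d) ℂ)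
    (hσ : σ.PosDef) (hσtr : σ.trace = 1)
    (hρ : ρ.PosDef) (hρtr : ρ.trace = 1) :
    frob (msqrt σ * misqrt (E σ) * msqrt (misqrt (E σ) * E ρ * misqrt (E σ)) * msqrt (E σ) -
        msqrt (misqrt σ * ρ * misqrt σ) * msqrt σ) ≥
      (1 / 2) * (Real.sqrt (opNorm (misqrt σ * ρ * misqrt σ)))⁻¹ *
        (Real.sqrt (opNorm (minv σ)))⁻¹ * frob (σ * minv (E σ) * E ρ - ρ) := by
  classical
  rcases Nat.eq_zero_or_pos d with hd | hd
  · subst hd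
    have hz : ∀ M : Matrix (Fin 0) (Fin 0) ℂ, frob M = 0 := fun M => by
      simp [frob, Matrix.trace]
    rw [hz, hz]
    simp
  have hσpsd := hσ.posSemidef
  have hρpsd := hρ.posSemidef
  have hE1 : E 1 = 1 := hEfix 1 N.one_mem
  set σN := E σ with hσNdef
  set ρN := E ρ with hρNdef
  have hσNpsd : σN.PosSemidef := hEpos σ hσpsd
  have hρNpsd : ρN.PosSemidef := hEpos ρ hρpsd
  have hρNtr : ρN.trace = 1 := by rw [hρNdef, hEtr, hρtr]
  have hσtrre : (Matrix.trace σ).re = 1 := by rw [hσtr]; simp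
  clear_value σN ρN
  set sσ := msqrt σ with hsσdef
  set iσ := misqrt σ with hiσdef
  have hss : sσ * sσ = σ := msqrt_mul_self hσpsd
  have his1 : iσ * sσ = 1 := misqrt_mul_msqrt hσ
  have hsi1 : sσ * iσ = 1 := msqrt_mul_misqrt hσ
  have hsσh : sσ.IsHermitian := msqrt_herm hσpsd.1
  have hiσh : iσ.IsHermitian := misqrt_herm hσpsd.1
  clear_value sσ iσ
  set s := opNorm (minv σ) with hsdef
  have hs0 : (0:ℝ) ≤ s := norm_nonneg _
  have hd_le : (d:ℝ) ≤ s := by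
    have h1 : Matrix.trace ((minv σ) * σ) = (d : ℂ) := by
      rw [Matrix.trace_mul_comm, mul_minv hσ, Matrix.trace_one]
      simp
    have h2 := trace_psd_le (P := minv σ) hσpsd
    rw [h1, hσtrre, mul_one] at h2
    simpa using h2
  have hs1 : (1:ℝ) ≤ s := le_trans (by exact_mod_cast hd) hd_le
  have hs_pos : (0:ℝ) < s := lt_of_lt_of_le one_pos hs1
  -- lower bound for quadratic form of σ
  have hquadσ : ∀ v, s⁻¹ * ns v ≤ (dotProduct (star v) (σ *ᵥ v)).re := by
    intro v
    have hq0 : (0:ℝ) ≤ (dotProduct (star v) (σ *ᵥ v)).re :=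
      hσpsd.re_dotProduct_nonneg v
    rcases eq_or_lt_of_le (ns_nonneg v) with hv | hv
    · rw [← hv, mul_zero]
      exact hq0
    · have e0 : (ns v : ℝ) = (dotProduct (star v) ((sσ * iσ) *ᵥ v)).re := by
        rw [hsi1, Matrix.one_mulVec, ns_eq_dot]
        simp
      have e3 : ns (sσ *ᵥ v) = (dotProduct (star v) (σ *ᵥ v)).re := by
        rw [← quad_sq' hsσh, hss]
      have e5 : ns (iσ *ᵥ v) ≤ s * ns v := by
        rw [← quad_sq' hiσh, hiσdef, misqrt_mul_misqrt hσpsd, hsdef]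
        exact quad_le_opNorm _ _
      set q := (dotProduct (star v) (σ *ᵥ v)).re with hq
      have key : ns v ≤ Real.sqrt q * Real.sqrt (s * ns v) := by
        calc ns v = (dotProduct (star v) ((sσ * iσ) *ᵥ v)).re := e0
          _ = (dotProduct (star (sσ *ᵥ v)) (iσ *ᵥ v)).re := by rw [dot_split hsσh]
          _ ≤ Real.sqrt (ns (sσ *ᵥ v)) * Real.sqrt (ns (iσ *ᵥ v)) := dot_cauchy _ _
          _ ≤ Real.sqrt q * Real.sqrt (s * ns v) := by
              apply mul_le_mul
              · rw [e3]
              · exact Real.sqrt_le_sqrt e5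
              · exact Real.sqrt_nonneg _
              · exact Real.sqrt_nonneg _
      have key2 : ns v * ns v ≤ q * (s * ns v) := by
        have h6 := mul_le_mul key key (ns_nonneg v) (by positivity)
        calc ns v * ns v
            ≤ (Real.sqrt q * Real.sqrt (s * ns v)) * (Real.sqrt q * Real.sqrt (s * ns v)) := h6
          _ = (Real.sqrt q * Real.sqrt q) * (Real.sqrt (s * ns v) * Real.sqrt (s * ns v)) := by
              ring
          _ = q * (s * ns v) := by
              rw [Real.mul_self_sqrt hq0, Real.mul_self_sqrt (by positivity)]
      rw [inv_mul_le_iff₀ hs_pos]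
      nlinarith [hv, key2]
  -- σN quadratic lower bound and positive-definiteness
  have hσNlow : ∀ v, s⁻¹ * ns v ≤ (dotProduct (star v) (σN *ᵥ v)).re := by
    have hsub : (σ - ((s⁻¹ : ℝ) : ℂ) • 1).PosSemidef := psd_sub_smul hσpsd hquadσ
    have hEsub := hEpos _ hsub
    have h3 : E (σ - ((s⁻¹ : ℝ) : ℂ) • 1) = σN - ((s⁻¹ : ℝ) : ℂ) • 1 := by
      rw [map_sub, LinearMap.map_smul, hE1, ← hσNdef]
    rw [h3] at hEsub
    exact quad_of_psd_sub hEsub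
  have hσN : σN.PosDef := posDef_of_quad hσNpsd (inv_pos.mpr hs_pos) hσNlow
  set sσN := msqrt σN with hsσNdef
  set iσN := misqrt σN with hiσNdef
  have hssN : sσN * sσN = σN := msqrt_mul_self hσNpsd
  have hisN : iσN * sσN = 1 := misqrt_mul_msqrt hσN
  have hsiN : sσN * iσN = 1 := msqrt_mul_misqrt hσN
  have hiiN : iσN * iσN = minv σN := misqrt_mul_misqrt hσNpsd
  have hsσNh : sσN.IsHermitian := msqrt_herm hσNpsd.1
  have hiσNh : iσN.IsHermitian := misqrt_herm hσNpsd.1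
  clear_value sσN iσN
  -- opNorm of minv σN
  have hminvN : opNorm (minv σN) ≤ s := by
    apply opNorm_psd_le_of_quad (minv_posSemidef hσNpsd) hs0
    intro v
    have e1 : (dotProduct (star v) ((minv σN) *ᵥ v)).re = ns (iσN *ᵥ v) := by
      rw [← hiiN]
      exact quad_sq' hiσNh v
    have e2 := hσNlow (iσN *ᵥ v)
    have e3 : (dotProduct (star (iσN *ᵥ v)) (σN *ᵥ (iσN *ᵥ v))).re = ns v := by
      rw [← hssN, quad_sq' hsσNh, Matrix.mulVec_mulVec, hsiN, Matrix.one_mulVec]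
    rw [e3] at e2
    rw [inv_mul_le_iff₀ hs_pos] at e2
    rw [e1]
    exact e2
  -- Γ matrices
  set Γm := iσ * ρ * iσ with hΓdef
  have hΓpsd : Γm.PosSemidef := conj_psd hρpsd hiσh
  set gΓ := msqrt Γm with hgΓdef
  have hgΓh : gΓ.IsHermitian := msqrt_herm hΓpsd.1
  have hgg : gΓ * gΓ = Γm := msqrt_mul_self hΓpsd
  clear_value Γm gΓ
  set ΓN := iσN * ρN * iσN with hΓNdef
  have hΓNpsd : ΓN.PosSemidef := conj_psd hρNpsd hiσNh
  set gN := msqrt ΓN with hgNdef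
  have hgNh : gN.IsHermitian := msqrt_herm hΓNpsd.1
  have hggN : gN * gN = ΓN := msqrt_mul_self hΓNpsd
  clear_value ΓN gN
  -- trace identities
  have htrΓσ : Matrix.trace (Γm * σ) = 1 := by
    rw [hΓdef, hiσdef, tr_conj_inv hσ ρ, hρtr]
  have htrΓNσN : Matrix.trace (ΓN * σN) = 1 := by
    rw [hΓNdef, hiσNdef]
    rw [tr_conj_inv hσN ρN, hρNtr]
  set g := opNorm Γm with hgdef
  have hg1 : (1:ℝ) ≤ g := by
    have h2 := trace_psd_le (P := Γm) hσpsd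
    rw [htrΓσ, hσtrre, mul_one] at h2
    simpa using h2
  have hg0 : (0:ℝ) < g := lt_of_lt_of_le one_pos hg1
  -- operator norm bounds
  have hop_sσ : opNorm sσ ≤ 1 := by
    have h1 : frob sσ = 1 := by
      rw [frob, hsσh.eq, hss, hσtrre, Real.sqrt_one]
    calc opNorm sσ ≤ frob sσ := opNorm_le_frob _
      _ = 1 := h1
  have hop_sg : opNorm (sσ * gΓ) ≤ 1 := by
    have e1 : (sσ * gΓ)ᴴ * (sσ * gΓ) = gΓ * (σ * gΓ) := by
      rw [Matrix.conjTranspose_mul, hgΓh.eq, hsσh.eq]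
      calc gΓ * sσ * (sσ * gΓ) = gΓ * ((sσ * sσ) * gΓ) := by simp only [mul_assoc]
        _ = gΓ * (σ * gΓ) := by rw [hss]
    have e2 : Matrix.trace (gΓ * (σ * gΓ)) = 1 := by
      rw [Matrix.trace_mul_comm, mul_assoc, hgg, Matrix.trace_mul_comm]
      exact htrΓσ
    have h1 : frob (sσ * gΓ) = 1 := by
      rw [frob, e1, e2]
      simp
    calc opNorm (sσ * gΓ) ≤ frob (sσ * gΓ) := opNorm_le_frob _
      _ = 1 := h1
  set C := iσN * (gN * sσN) with hCdef
  clear_value C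
  have hop_C : opNorm C ≤ Real.sqrt s := by
    have hCH : Cᴴ = sσN * (gN * iσN) := by
      rw [hCdef, Matrix.conjTranspose_mul, Matrix.conjTranspose_mul, hiσNh.eq, hgNh.eq,
        hsσNh.eq, mul_assoc]
    have e1 : Cᴴ * C = sσN * (gN * (minv σN * (gN * sσN))) := by
      rw [hCH, hCdef, ← hiiN]
      simp only [mul_assoc]
    have e2 : Matrix.trace (Cᴴ * C) = Matrix.trace (minv σN * (gN * σN * gN)) := by
      rw [e1]
      calc Matrix.trace (sσN * (gN * (minv σN * (gN * sσN))))
          = Matrix.trace ((gN * (minv σN * (gN * sσN))) * sσN) := Matrix.trace_mul_comm _ _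
        _ = Matrix.trace (gN * (minv σN * (gN * (sσN * sσN)))) := by simp only [mul_assoc]
        _ = Matrix.trace (gN * (minv σN * (gN * σN))) := by rw [hssN]
        _ = Matrix.trace ((minv σN * (gN * σN)) * gN) := Matrix.trace_mul_comm _ _
        _ = Matrix.trace (minv σN * (gN * σN * gN)) := by simp only [mul_assoc]
    have e4 : Matrix.trace (gN * σN * gN) = 1 := by
      calc Matrix.trace (gN * σN * gN)
          = Matrix.trace (gN * (gN * σN)) := by
            rw [Matrix.trace_mul_comm]
        _ = Matrix.trace (ΓN * σN) := by rw [← mul_assoc, hggN]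
        _ = 1 := htrΓNσN
    have e3 : (Matrix.trace (Cᴴ * C)).re ≤ s := by
      rw [e2]
      calc (Matrix.trace (minv σN * (gN * σN * gN))).re
          ≤ opNorm (minv σN) * (Matrix.trace (gN * σN * gN)).re :=
            trace_psd_le (conj_psd hσNpsd hgNh)
        _ = opNorm (minv σN) := by rw [e4]; simp
        _ ≤ s := hminvN
    calc opNorm C ≤ frob C := opNorm_le_frob _
      _ ≤ Real.sqrt s := by
          rw [frob]
          exact Real.sqrt_le_sqrt e3
  -- the exact decomposition
  set Δ := sσ * iσN * gN * sσN - gΓ * sσ with hΔdef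
  set T := σ * minv σN * ρN - ρ with hTdef
  clear_value Δ T
  have hρeq : sσ * (gΓ * (gΓ * sσ)) = ρ := by
    rw [show gΓ * (gΓ * sσ) = Γm * sσ from by rw [← mul_assoc, hgg], hΓdef]
    calc sσ * (iσ * ρ * iσ * sσ) = (sσ * iσ) * (ρ * (iσ * sσ)) := by simp only [mul_assoc]
      _ = ρ := by rw [hsi1, his1, mul_one, one_mul]
  have e_left : sσ * (Δ * C) = σ * minv σN * ρN - sσ * (gΓ * (sσ * C)) := by
    rw [hΔdef, hCdef, sub_mul, mul_sub]
    congr 1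
    · -- sσ * ((sσ*iσN*gN*sσN) * C) = σ * minv σN * ρN
      rw [← hss, ← hiiN]
      simp only [mul_assoc]
      rw [show sσN * (iσN * (gN * sσN)) = gN * sσN from by rw [← mul_assoc, hsiN, one_mul]]
      rw [show gN * (gN * sσN) = ΓN * sσN from by rw [← mul_assoc, hggN], hΓNdef]
      simp only [mul_assoc]
      rw [show iσN * sσN = 1 from hisN, mul_one]
    · simp only [mul_assoc]
  have e_right : (sσ * gΓ) * Δ = sσ * (gΓ * (sσ * C)) - ρ := by
    rw [hΔdef, hCdef, mul_sub]
    congr 1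
    · simp only [mul_assoc]
    · rw [show sσ * gΓ * (gΓ * sσ) = sσ * (gΓ * (gΓ * sσ)) from by simp only [mul_assoc], hρeq]
  have hTid : T = sσ * (Δ * C) + (sσ * gΓ) * Δ := by
    rw [e_left, e_right, sub_add_sub_cancel, hTdef]
  -- final numeric estimates
  have hfrobΔ0 : (0:ℝ) ≤ frob Δ := frob_nonneg _
  have hTbound : frob T ≤ Real.sqrt s * frob Δ + frob Δ := by
    rw [hTid]
    calc frob (sσ * (Δ * C) + (sσ * gΓ) * Δ)
        ≤ frob (sσ * (Δ * C)) + frob ((sσ * gΓ) * Δ) := frob_add_le _ _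
      _ ≤ opNorm sσ * frob (Δ * C) + opNorm (sσ * gΓ) * frob Δ :=
          add_le_add (frob_mul_le_left _ _) (frob_mul_le_left _ _)
      _ ≤ 1 * frob (Δ * C) + 1 * frob Δ :=
          add_le_add (mul_le_mul_of_nonneg_right hop_sσ (frob_nonneg _))
            (mul_le_mul_of_nonneg_right hop_sg (frob_nonneg _))
      _ = frob (Δ * C) + frob Δ := by ring
      _ ≤ frob Δ * opNorm C + frob Δ := add_le_add_left (frob_mul_le_right _ _) _
      _ ≤ frob Δ * Real.sqrt s + frob Δ :=
          add_le_add_left (mul_le_mul_of_nonneg_left hop_C hfrobΔ0) _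
      _ = Real.sqrt s * frob Δ + frob Δ := by ring
  have hsq_g : (1:ℝ) ≤ Real.sqrt g := by
    rw [show (1:ℝ) = Real.sqrt 1 from Real.sqrt_one.symm]
    exact Real.sqrt_le_sqrt hg1
  have hsq_s : (1:ℝ) ≤ Real.sqrt s := by
    rw [show (1:ℝ) = Real.sqrt 1 from Real.sqrt_one.symm]
    exact Real.sqrt_le_sqrt hs1
  have hsg_pos : (0:ℝ) < Real.sqrt g := lt_of_lt_of_le one_pos hsq_g
  have hss_pos : (0:ℝ) < Real.sqrt s := lt_of_lt_of_le one_pos hsq_s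
  have hone : (1:ℝ) ≤ Real.sqrt g * Real.sqrt s := by
    calc (1:ℝ) = 1 * 1 := by ring
      _ ≤ Real.sqrt g * Real.sqrt s :=
          mul_le_mul hsq_g hsq_s zero_le_one (le_trans zero_le_one hsq_g)
  have t1 : Real.sqrt s * frob Δ ≤ Real.sqrt g * (Real.sqrt s * frob Δ) :=
    le_mul_of_one_le_left (mul_nonneg (Real.sqrt_nonneg _) hfrobΔ0) hsq_g
  have t2 : frob Δ ≤ (Real.sqrt g * Real.sqrt s) * frob Δ :=
    le_mul_of_one_le_left hfrobΔ0 hone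
  have h2 : frob T ≤ 2 * Real.sqrt g * Real.sqrt s * frob Δ := by
    calc frob T ≤ Real.sqrt s * frob Δ + frob Δ := hTbound
      _ ≤ Real.sqrt g * (Real.sqrt s * frob Δ) + (Real.sqrt g * Real.sqrt s) * frob Δ :=
          add_le_add t1 t2
      _ = 2 * Real.sqrt g * Real.sqrt s * frob Δ := by ring
  rw [ge_iff_le]
  calc 1 / 2 * (Real.sqrt g)⁻¹ * (Real.sqrt s)⁻¹ * frob T
      ≤ 1 / 2 * (Real.sqrt g)⁻¹ * (Real.sqrt s)⁻¹ * (2 * Real.sqrt g * Real.sqrt s * frob Δ) := by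
        apply mul_le_mul_of_nonneg_left h2
        exact mul_nonneg (mul_nonneg (by norm_num) (inv_nonneg.mpr (Real.sqrt_nonneg _)))
          (inv_nonneg.mpr (Real.sqrt_nonneg _))
    _ = frob Δ := by
        field_simp
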